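/- The constant β₀ = -log(log(1+√2))/log 2 is best possible in the upper bound: if β < β₀, then there exist a, b > 0 with a ≠ b such that M(a,b) > C(a,b)^β · A(a,b)^(1-β). -/

import Mathlib

noncomputable def NSmean (a b : ℝ) : ℝ := (a - b) / (2 * Real.arsinh ((a - b) / (a + b)))
noncomputable def Amean (a b : ℝ) : ℝ := (a + b) / 2
noncomputable def Cmean (a b : ℝ) : ℝ := (a ^ 2 + b ^ 2) / (a + b)

lemma arsinh_one_eq : Real.arsinh 1 = Real.log (1 + Real.sqrt 2) := by
  rw [Real.arsinh]
  norm_num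

lemma L_pos : 0 < Real.arsinh 1 := by
  exact Real.arsinh_pos_iff.2 one_pos

lemma L_lt_one : Real.arsinh 1 < 1 := by
  rw [arsinh_one_eq]
  rw [Real.log_lt_iff_lt_exp (by positivity)]
  have h2 : Real.sqrt 2 < 1.5 := by
    rw [show (1.5:ℝ) = Real.sqrt (1.5^2) by rw [Real.sqrt_sq]; norm_num]
    apply Real.sqrt_lt_sqrt <;> norm_num
  have := Real.exp_one_gt_d9
  linarith

theorem stmt_3 (β : ℝ) (hβ : β < -Real.log (Real.log (1 + Real.sqrt 2)) / Real.log 2) :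
    ∃ a b : ℝ, 0 < a ∧ 0 < b ∧ a ≠ b ∧
      Cmean a b ^ β * Amean a b ^ (1 - β) < NSmean a b := by
  set L := Real.arsinh 1 with hL
  have hLpos : 0 < L := L_pos
  have hβ' : β < -Real.log L / Real.log 2 := by rw [hL, arsinh_one_eq]; exact hβ
  have hlog2 : (0:ℝ) < Real.log 2 := Real.log_pos (by norm_num)
  -- key: (1/2)^(1-β) < 1/(2L)
  have hkey : ((1:ℝ)/2) ^ (1-β) < 1 / (2 * L) := by
    have h1 : L < (2:ℝ) ^ (-β) := by
      rw [Real.rpow_def_of_pos (by norm_num : (0:ℝ) < 2)]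
      rw [← Real.exp_log hLpos]
      apply Real.exp_lt_exp.2
      have : β * Real.log 2 < -Real.log L := by
        rw [← lt_div_iff₀ hlog2]; exact hβ'
      linarith
    have h2 : 2 * L < (2:ℝ) ^ (1-β) := by
      rw [show (1-β) = 1 + (-β) by ring, Real.rpow_add (by norm_num), Real.rpow_one]
      nlinarith [Real.rpow_pos_of_pos (by norm_num : (0:ℝ) < 2) (-β)]
    rw [Real.div_rpow (by norm_num) (by norm_num), Real.one_rpow]
    rw [div_lt_div_iff₀ (Real.rpow_pos_of_pos (by norm_num) _) (by positivity)]
    nlinarith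
  -- the function
  set F : ℝ → ℝ := fun t => Cmean 1 t ^ β * Amean 1 t ^ (1-β) - NSmean 1 t with hF
  have hF0 : F 0 < 0 := by
    simp only [hF, Cmean, Amean, NSmean]
    norm_num
    rw [← hL]
    have heq : 1/(2*L) = L⁻¹ * (1/2) := by field_simp
    linarith [hkey, heq ▸ hkey]
  have hcont : ContinuousAt F 0 := by
    apply ContinuousAt.sub
    · apply ContinuousAt.mul
      · apply ContinuousAt.rpow_const
        · exact ContinuousAt.div (by fun_prop) (by fun_prop) (by norm_num)
        · left; simp [Cmean]
      · apply ContinuousAt.rpow_const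
        · exact ContinuousAt.div (by fun_prop) (by fun_prop) (by norm_num)
        · left; simp [Amean]
    · apply ContinuousAt.div
      · fun_prop
      · apply ContinuousAt.mul continuousAt_const
        apply Real.continuous_arsinh.continuousAt.comp
        exact ContinuousAt.div (by fun_prop) (by fun_prop) (by norm_num)
      · norm_num
  have htend : Filter.Tendsto F (nhdsWithin 0 (Set.Ioi 0)) (nhds (F 0)) :=
    hcont.continuousWithinAt.tendsto
  have hev1 : ∀ᶠ t in nhdsWithin (0:ℝ) (Set.Ioi 0), F t < 0 :=
    htend.eventually (eventually_lt_nhds hF0)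
  have hev2 : ∀ᶠ t in nhdsWithin (0:ℝ) (Set.Ioi 0), t < 1 :=
    Filter.Eventually.filter_mono nhdsWithin_le_nhds (eventually_lt_nhds (by norm_num))
  have hev3 : ∀ᶠ t in nhdsWithin (0:ℝ) (Set.Ioi 0), t ∈ Set.Ioi (0:ℝ) :=
    self_mem_nhdsWithin
  obtain ⟨t, ht1, ht2, ht3⟩ := (hev1.and (hev2.and hev3)).exists
  refine ⟨1, t, one_pos, ht3, by intro h; rw [← h] at ht2; linarith, ?_⟩
  have := ht1
  simp only [hF] at this
  linarith
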